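/- Let G be an n-vertex totally ordered graph, let S be a set of s vertices of G with s ≤ n − 2, let G' = G − S (inheriting the vertex and edge orders), let A be the array obtained from the height table of G by deleting the columns indexed by vertices of S, and let A' be the height table of G'. Index the cells of A and A' by Z = {1,2,3,…} × V(G'), ordered so that (i,u) ≤ (i',v) iff i < i', or i = i' and u ≤ v in the vertex order of G'. Then there exists a family of arrays {A_β : β ∈ Z}, each with cells indexed by Z, where each cell is empty, contains an edge of G', or contains a hole, each edge of G' appears in exactly one cell of each A_β, the initial array (indexed by the minimum element of Z) has at most s holes in each column, and for each β ∈ Z: (1) if δ < β then A_β(δ) = A'(δ); (2) if δ ≥ β and A_β(δ) is not a hole then A_β(δ) = A(δ); (3) if γ is the successor of β = (i,u) in Z, then A_γ is obtained from A_β by swapping A_β(β) with A_β(δ) for some δ in the critical interval of A_β, and moreover if β and δ lie in distinct columns u and v then A_β(δ) is the edge uv. Here the critical interval of A_β, for β = (i,u), is the interval [(i,u),(j,u)] where j is the least integer with j ≥ i such that A_β(j,u) does not contain a hole. -/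

import Mathlib

set_option linter.unusedSectionVars false
set_option maxHeartbeats 1000000


open scoped Classical

namespace AltitudePaper

variable {V : Type*} [Fintype V]

/-- The list of cells `(i, u)` (row `i`, column `u`), rows `1..N`, in the order
they are filled: by row, then by the vertex (column) order. -/
noncomputable def cellList (ov : LinearOrder V) (N : ℕ) : List (ℕ × V) :=
  letI := ov
  (List.range N).flatMap fun i => ((Finset.univ : Finset V).sort (· ≤ ·)).map fun u => (i + 1, u)

/-- The largest (in the edge order `oe`) edge of `G` incident to `u` not among `used`. -/
noncomputable def pick (G : SimpleGraph V) (oe : LinearOrder (Sym2 V)) (u : V)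
    (used : Finset (Sym2 V)) : Option (Sym2 V) :=
  letI := oe
  ((Finset.univ : Finset (Sym2 V)).filter fun e => e ∈ G.edgeSet ∧ u ∈ e ∧ e ∉ used).max

/-- Fill the given list of cells in order, greedily placing at each cell `(i,u)` the
largest unused edge incident to `u`. -/
noncomputable def tableAux (G : SimpleGraph V) (oe : LinearOrder (Sym2 V)) :
    List (ℕ × V) → Finset (Sym2 V) → (ℕ × V) → Option (Sym2 V)
  | [], _, _ => none
  | c :: rest, used, β =>
    match pick G oe c.2 used with
    | none => if β = c then none else tableAux G oe rest used β
    | some e => if β = c then some e else tableAux G oe rest (insert e used) β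

/-- The height table of the totally ordered graph `(G, ov, oe)`:  cells `(i,u)` with
`i` a positive integer (row) and `u` a vertex (column) are filled in order (by row,
then by column order), each cell receiving the largest edge incident to its column
not appearing in an earlier cell (and left empty if there is none). -/
noncomputable def heightTable (G : SimpleGraph V) (ov : LinearOrder V)
    (oe : LinearOrder (Sym2 V)) : ℕ × V → Option (Sym2 V) :=
  tableAux G oe (cellList ov (Fintype.card (Sym2 V))) ∅

/-- The height `h_G(e)` of an edge `e`: the index of the row of the height table
containing `e`. -/
noncomputable def edgeHeight (G : SimpleGraph V) (ov : LinearOrder V)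
    (oe : LinearOrder (Sym2 V)) (e : Sym2 V) : ℕ :=
  sSup {i | ∃ u, heightTable G ov oe (i, u) = some e}

/-- A monotone path in the edge-ordered graph `(G, oe)`: a path traversing its
edges in increasing order of the edge ordering. -/
def IsMonotonePath (G : SimpleGraph V) (oe : LinearOrder (Sym2 V)) {u v : V}
    (p : G.Walk u v) : Prop :=
  p.IsPath ∧ List.Chain' (fun e f => oe.lt e f) p.edges

/-- The height of a (nontrivial) monotone path: the height of its last edge. -/
noncomputable def pathHeight (G : SimpleGraph V) (ov : LinearOrder V)
    (oe : LinearOrder (Sym2 V)) {u v : V} (p : G.Walk u v) : ℕ :=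
  (p.edges.getLast?.map (edgeHeight G ov oe)).getD 0


/-- The graph `G − S`: delete the vertices of `S` (and all incident edges).  It is
realized on the same vertex type, with the vertices of `S` made isolated; its height
table therefore agrees, on columns outside `S`, with the height table of the induced
graph on `V ∖ S` with the inherited vertex and edge orders. -/
def delVerts (G : SimpleGraph V) (S : Set V) : SimpleGraph V where
  Adj a b := G.Adj a b ∧ a ∉ S ∧ b ∉ S
  symm := by constructor; intro a b h; exact ⟨h.1.symm, h.2.2, h.2.1⟩
  loopless := by constructor; intro a h; exact G.loopless.irrefl a h.1

/-- The contents of a cell of one of the arrays `A_β`: empty, an edge, or a hole. -/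
inductive Cell (V : Type*) where
  | empty : Cell V
  | edge : Sym2 V → Cell V
  | hole : Cell V

/-- View a height-table entry as a cell (no holes). -/
def ofOpt : Option (Sym2 V) → Cell V
  | none => Cell.empty
  | some e => Cell.edge e

/-- The strict order on the index set `Z = {1,2,…} × V(G′)` of cells:
`(i,u) < (i',v)` iff `i < i'`, or `i = i'` and `u` precedes `v` in the vertex
order. -/
def zLT (ov : LinearOrder V) {S : Set V} (a b : ℕ × {u : V // u ∉ S}) : Prop :=
  a.1 < b.1 ∨ (a.1 = b.1 ∧ ov.lt a.2.val b.2.val)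

/-- The (non-strict) order on `Z`. -/
def zLE (ov : LinearOrder V) {S : Set V} (a b : ℕ × {u : V // u ∉ S}) : Prop :=
  zLT ov a b ∨ a = b

/-- `γ` is the successor of `β` in `Z`. -/
def IsSuccZ (ov : LinearOrder V) {S : Set V} (β γ : ℕ × {u : V // u ∉ S}) : Prop :=
  zLT ov β γ ∧ ∀ δ, zLT ov β δ → zLE ov γ δ

/-- `j` is the row index of the top of the critical interval `[(i,u),(j,u)]` of the
array `Af β` at `β = (i,u)`: the least `j ≥ i` such that the cell `(j, u)` does not
contain a hole. -/
def IsCritBound {S : Set V} (Af : (ℕ × {u : V // u ∉ S}) → (ℕ × {u : V // u ∉ S}) → Cell V)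
    (β : ℕ × {u : V // u ∉ S}) (j : ℕ) : Prop :=
  β.1 ≤ j ∧ Af β (j, β.2) ≠ Cell.hole ∧
    ∀ j', β.1 ≤ j' → j' < j → Af β (j', β.2) = Cell.hole

/-! ### table lemmas -/

section Table

variable (G : SimpleGraph V) (oe : LinearOrder (Sym2 V))

lemma pick_spec {u : V} {used : Finset (Sym2 V)} {e : Sym2 V}
    (h : pick G oe u used = some e) : e ∈ G.edgeSet ∧ u ∈ e ∧ e ∉ used := by
  letI := oe
  have := Finset.mem_of_max h
  simpa using (Finset.mem_filter.mp this).2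

lemma pick_le {u : V} {used : Finset (Sym2 V)} {e : Sym2 V}
    (he : e ∈ G.edgeSet) (hu : u ∈ e) (hused : e ∉ used) :
    ∃ g, pick G oe u used = some g ∧ oe.le e g := by
  letI := oe
  have hmem : e ∈ (Finset.univ : Finset (Sym2 V)).filter
      (fun e => e ∈ G.edgeSet ∧ u ∈ e ∧ e ∉ used) := by
    simp [he, hu, hused]
  obtain ⟨b, hb⟩ := Finset.max_of_mem hmem
  refine ⟨b, hb, ?_⟩
  have := Finset.le_max hmem
  rw [hb] at this
  exact_mod_cast this

lemma tableAux_not_mem {L : List (ℕ × V)} {used : Finset (Sym2 V)} {β : ℕ × V}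
    (h : β ∉ L) : tableAux G oe L used β = none := by
  induction L generalizing used with
  | nil => rfl
  | cons c rest ih =>
    have hβc : β ≠ c := by intro he; exact h (he ▸ List.mem_cons_self (a := c) (l := rest))
    have hβr : β ∉ rest := fun hr => h (List.mem_cons_of_mem _ hr)
    show tableAux G oe (c :: rest) used β = none
    unfold tableAux
    cases hp : pick G oe c.2 used with
    | none => simp [hβc, ih hβr]
    | some e => simp [hβc, ih hβr]

lemma tableAux_spec {L : List (ℕ × V)} {used : Finset (Sym2 V)} {β : ℕ × V} {e : Sym2 V}
    (h : tableAux G oe L used β = some e) :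
    e ∈ G.edgeSet ∧ β.2 ∈ e ∧ e ∉ used := by
  induction L generalizing used with
  | nil => simp [tableAux] at h
  | cons c rest ih =>
    rw [show tableAux G oe (c :: rest) used β =
      (match pick G oe c.2 used with
      | none => if β = c then none else tableAux G oe rest used β
      | some e => if β = c then some e else tableAux G oe rest (insert e used) β) from rfl] at h
    cases hp : pick G oe c.2 used with
    | none =>
      rw [hp] at h
      by_cases hc : β = c
      · simp [hc] at h
      · simp only [hc, if_false] at h; exact ih h
    | some e₀ =>
      rw [hp] at h
      by_cases hc : β = c
      · simp only [hc, if_true] at h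
        obtain rfl : e₀ = e := by injection h
        have := pick_spec G oe hp
        exact hc ▸ this
      · simp only [hc, if_false] at h
        obtain ⟨h1, h2, h3⟩ := ih h
        exact ⟨h1, h2, fun hm => h3 (Finset.mem_insert_of_mem hm)⟩

lemma tableAux_inj {L : List (ℕ × V)} {used : Finset (Sym2 V)} {β β' : ℕ × V} {e : Sym2 V}
    (hne : β ≠ β') (h1 : tableAux G oe L used β = some e)
    (h2 : tableAux G oe L used β' = some e) : False := by
  induction L generalizing used with
  | nil => simp [tableAux] at h1
  | cons c rest ih =>
    rw [show ∀ γ, tableAux G oe (c :: rest) used γ =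
      (match pick G oe c.2 used with
      | none => if γ = c then none else tableAux G oe rest used γ
      | some e => if γ = c then some e else tableAux G oe rest (insert e used) γ)
      from fun _ => rfl] at h1 h2
    cases hp : pick G oe c.2 used with
    | none =>
      rw [hp] at h1 h2
      by_cases hc : β = c
      · simp [hc] at h1
      · by_cases hc' : β' = c
        · simp [hc'] at h2
        · simp only [hc, hc', if_false] at h1 h2; exact ih h1 h2
    | some e₀ =>
      rw [hp] at h1 h2
      by_cases hc : β = c
      · have hc' : β' ≠ c := fun h => hne (hc.trans h.symm)
        simp only [hc, hc', if_true, if_false] at h1 h2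
        obtain rfl : e₀ = e := by injection h1
        exact (tableAux_spec G oe h2).2.2 (Finset.mem_insert_self _ _)
      · by_cases hc' : β' = c
        · simp only [hc, hc', if_true, if_false] at h1 h2
          obtain rfl : e₀ = e := by injection h2
          exact (tableAux_spec G oe h1).2.2 (Finset.mem_insert_self _ _)
        · simp only [hc, hc', if_false] at h1 h2; exact ih h1 h2

lemma tableAux_max {R : (ℕ × V) → (ℕ × V) → Prop} (hirr : ∀ c, ¬ R c c)
    {L : List (ℕ × V)} {used : Finset (Sym2 V)} {β : ℕ × V} {e : Sym2 V}
    (hL : L.Pairwise R) (hβ : β ∈ L) (he : e ∈ G.edgeSet) (hu : β.2 ∈ e)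
    (hused : e ∉ used)
    (hbefore : ∀ c ∈ L, R c β → tableAux G oe L used c ≠ some e) :
    ∃ g, tableAux G oe L used β = some g ∧ oe.le e g := by
  induction L generalizing used with
  | nil => simp at hβ
  | cons c rest ih =>
    have heq : ∀ (us : Finset (Sym2 V)) γ, tableAux G oe (c :: rest) us γ =
      (match pick G oe c.2 us with
      | none => if γ = c then none else tableAux G oe rest us γ
      | some e => if γ = c then some e else tableAux G oe rest (insert e us) γ) :=
      fun _ _ => rfl
    rcases List.mem_cons.mp hβ with rfl | hβr
    · obtain ⟨g, hg, hle⟩ := pick_le G oe he hu hused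
      exact ⟨g, by rw [heq, hg]; simp, hle⟩
    · have hβc : β ≠ c := by
        rintro rfl
        exact hirr β ((List.pairwise_cons.mp hL).1 β hβr)
      have hcrest : ∀ c' ∈ rest, c' ≠ c := by
        intro c' hc' h
        exact hirr c (h ▸ (List.pairwise_cons.mp hL).1 c' hc')
      cases hp : pick G oe c.2 used with
      | none =>
        have htrans : ∀ γ, γ ∈ rest → tableAux G oe (c :: rest) used γ =
            tableAux G oe rest used γ := by
          intro γ hγ; rw [heq, hp]; simp [hcrest γ hγ]
        obtain ⟨g, hg, hle⟩ := ih (List.pairwise_cons.mp hL).2 hβr hused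
          (fun c' hc' hR h => hbefore c' (List.mem_cons_of_mem _ hc') hR
            ((htrans c' hc').symm ▸ h))
        exact ⟨g, by rw [htrans β hβr]; exact hg, hle⟩
      | some e₀ =>
        have htrans : ∀ γ, γ ∈ rest → tableAux G oe (c :: rest) used γ =
            tableAux G oe rest (insert e₀ used) γ := by
          intro γ hγ; rw [heq, hp]; simp [hcrest γ hγ]
        have hc_val : tableAux G oe (c :: rest) used c = some e₀ := by
          rw [heq, hp]; simp
        have hene : e ≠ e₀ := fun h => hbefore c List.mem_cons_self
          ((List.pairwise_cons.mp hL).1 β hβr) (by rw [hc_val, h])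
        have hused' : e ∉ insert e₀ used := by
          simp [hene, hused]
        obtain ⟨g, hg, hle⟩ := ih (List.pairwise_cons.mp hL).2 hβr hused'
          (fun c' hc' hR h => hbefore c' (List.mem_cons_of_mem _ hc') hR
            ((htrans c' hc').symm ▸ h))
        exact ⟨g, by rw [htrans β hβr]; exact hg, hle⟩

end Table

/-! ### cell order and cellList -/

def tLT (ov : LinearOrder V) (a b : ℕ × V) : Prop :=
  a.1 < b.1 ∨ (a.1 = b.1 ∧ ov.lt a.2 b.2)

section CellOrder

variable (ov : LinearOrder V)

lemma tLT_irrefl (c : ℕ × V) : ¬ tLT ov c c := by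
  letI := ov
  rintro (h | ⟨-, h⟩)
  · exact lt_irrefl _ h
  · exact lt_irrefl _ h

lemma tLT_trans {a b c : ℕ × V} (h1 : tLT ov a b) (h2 : tLT ov b c) : tLT ov a c := by
  letI := ov
  rcases h1 with h1 | ⟨e1, h1⟩ <;> rcases h2 with h2 | ⟨e2, h2⟩
  · exact Or.inl (h1.trans h2)
  · exact Or.inl (e2 ▸ h1)
  · exact Or.inl (e1 ▸ h2)
  · exact Or.inr ⟨e1.trans e2, h1.trans h2⟩

lemma tLT_ne {a b : ℕ × V} (h : tLT ov a b) : a ≠ b := by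
  rintro rfl; exact tLT_irrefl ov a h

lemma mem_cellList {N : ℕ} {β : ℕ × V} : β ∈ cellList ov N ↔ 1 ≤ β.1 ∧ β.1 ≤ N := by
  letI := ov
  unfold cellList
  simp only [List.mem_flatMap, List.mem_map, List.mem_range, Finset.mem_sort]
  constructor
  · rintro ⟨i, hi, u, -, rfl⟩
    simp; omega
  · rintro ⟨h1, h2⟩
    exact ⟨β.1 - 1, by omega, β.2, Finset.mem_univ _, by
      rw [show β.1 - 1 + 1 = β.1 by omega]⟩

lemma cellList_pairwise {N : ℕ} : (cellList ov N).Pairwise (tLT ov) := by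
  letI := ov
  unfold cellList
  rw [List.pairwise_flatMap]
  constructor
  · intro i _
    rw [List.pairwise_map]
    exact (Finset.sortedLT_sort (Finset.univ : Finset V)).pairwise.imp
      (fun {a b} h => Or.inr ⟨rfl, h⟩)
  · have : (List.range N).Pairwise (· < ·) := List.pairwise_lt_range
    exact this.imp (by
      rintro a b h x hx y hy
      simp only [List.mem_map] at hx hy
      obtain ⟨u, -, rfl⟩ := hx
      obtain ⟨v, -, rfl⟩ := hy
      exact Or.inl (by omega))

end CellOrder

/-! ### height table lemmas -/

section HT

variable (G : SimpleGraph V) (ov : LinearOrder V) (oe : LinearOrder (Sym2 V))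

lemma ht_spec {β : ℕ × V} {e : Sym2 V} (h : heightTable G ov oe β = some e) :
    e ∈ G.edgeSet ∧ β.2 ∈ e :=
  ⟨(tableAux_spec G oe h).1, (tableAux_spec G oe h).2.1⟩

lemma ht_mem_cellList {β : ℕ × V} {e : Sym2 V} (h : heightTable G ov oe β = some e) :
    β ∈ cellList ov (Fintype.card (Sym2 V)) := by
  by_contra hc
  rw [heightTable, tableAux_not_mem G oe hc] at h
  exact absurd h (by simp)

lemma ht_row {β : ℕ × V} {e : Sym2 V} (h : heightTable G ov oe β = some e) :
    1 ≤ β.1 ∧ β.1 ≤ Fintype.card (Sym2 V) :=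
  (mem_cellList ov).mp (ht_mem_cellList G ov oe h)

lemma ht_inj {β β' : ℕ × V} {e : Sym2 V} (hne : β ≠ β')
    (h1 : heightTable G ov oe β = some e) (h2 : heightTable G ov oe β' = some e) : False :=
  tableAux_inj G oe hne h1 h2

lemma ht_le {β : ℕ × V} {e : Sym2 V} (hmem : β ∈ cellList ov (Fintype.card (Sym2 V)))
    (he : e ∈ G.edgeSet) (hu : β.2 ∈ e)
    (hbef : ∀ c, tLT ov c β → heightTable G ov oe c ≠ some e) :
    ∃ g, heightTable G ov oe β = some g ∧ oe.le e g :=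
  tableAux_max G oe (tLT_irrefl ov) (cellList_pairwise ov) hmem he hu
    (Finset.notMem_empty e) (fun c _ hR => hbef c hR)

lemma ht_lt {i : ℕ} {u : V} {β' : ℕ × V} {e : Sym2 V} (h1 : 1 ≤ i)
    (hlt : tLT ov (i, u) β') (h2 : heightTable G ov oe β' = some e) (hu : u ∈ e) :
    ∃ f, heightTable G ov oe (i, u) = some f ∧ oe.lt e f := by
  letI := oe
  have hrow := ht_row G ov oe h2
  have hmem : (i, u) ∈ cellList ov (Fintype.card (Sym2 V)) := by
    rw [mem_cellList]
    refine ⟨h1, ?_⟩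
    rcases hlt with h | ⟨h, -⟩ <;> simp at h ⊢ <;> omega
  obtain ⟨f, hf, hle⟩ := ht_le G ov oe hmem (ht_spec G ov oe h2).1 hu (fun c hc hce =>
    ht_inj G ov oe (tLT_ne ov (tLT_trans ov hc hlt)) hce h2)
  refine ⟨f, hf, @lt_of_le_of_ne _ oe.toPartialOrder _ _ hle fun h => ?_⟩
  exact ht_inj G ov oe (tLT_ne ov hlt) (h ▸ hf) h2

lemma ht_complete {e : Sym2 V} (he : e ∈ G.edgeSet) :
    ∃ β : ℕ × V, heightTable G ov oe β = some e ∧ β.2 ∈ e := by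
  letI := oe
  by_contra hc
  push_neg at hc
  obtain ⟨u, hu⟩ : ∃ u, u ∈ e := by
    induction e using Sym2.ind with
    | _ x y => exact ⟨x, by simp⟩
  have hno : ∀ β : ℕ × V, heightTable G ov oe β ≠ some e := by
    intro β hβ
    exact hc β hβ ((ht_spec G ov oe hβ).2)
  set N := Fintype.card (Sym2 V) with hN
  have H : ∀ k : Fin N, ∃ g, heightTable G ov oe (k.1 + 1, u) = some g := by
    intro k
    obtain ⟨g, hg, -⟩ := ht_le G ov oe (β := (k.1 + 1, u))
      (by rw [mem_cellList]; exact ⟨by omega, by have := k.2; omega⟩) he hu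
      (fun c _ => hno c)
    exact ⟨g, hg⟩
  choose f hf using H
  have hinj : Function.Injective f := by
    intro k k' hkk
    by_contra hne
    exact ht_inj G ov oe (by simp [Prod.ext_iff]; intro h; omega) (hf k) (hkk ▸ hf k')
  have hbij : Function.Bijective f :=
    (Fintype.bijective_iff_injective_and_card f).mpr ⟨hinj, by simp [hN]⟩
  obtain ⟨k, hk⟩ := hbij.2 e
  exact hno _ (hk ▸ hf k)

end HT


section Del

variable (G : SimpleGraph V) (S : Set V)

lemma delVerts_subset {e : Sym2 V} (h : e ∈ (delVerts G S).edgeSet) : e ∈ G.edgeSet := by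
  induction e using Sym2.ind with
  | _ x y =>
    rw [SimpleGraph.mem_edgeSet] at h ⊢
    exact h.1

lemma delVerts_not_mem {e : Sym2 V} {u : V} (h : e ∈ (delVerts G S).edgeSet) (hu : u ∈ e) :
    u ∉ S := by
  induction e using Sym2.ind with
  | _ x y =>
    rw [SimpleGraph.mem_edgeSet] at h
    rcases Sym2.mem_iff.mp hu with rfl | rfl
    · exact h.2.1
    · exact h.2.2

lemma mem_delVerts {e : Sym2 V} :
    e ∈ (delVerts G S).edgeSet ↔ e ∈ G.edgeSet ∧ ∀ u ∈ e, u ∉ S := by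
  constructor
  · exact fun h => ⟨delVerts_subset G S h, fun u hu => delVerts_not_mem G S h hu⟩
  · intro ⟨h1, h2⟩
    induction e using Sym2.ind with
    | _ x y =>
      rw [SimpleGraph.mem_edgeSet] at h1 ⊢
      exact ⟨h1, h2 x (by simp), h2 y (by simp)⟩

lemma ht_delVerts_none {i : ℕ} {u : V} (hu : u ∈ S) (ov : LinearOrder V)
    (oe : LinearOrder (Sym2 V)) : heightTable (delVerts G S) ov oe (i, u) = none := by
  cases h : heightTable (delVerts G S) ov oe (i, u) with
  | none => rfl
  | some e =>
    exact absurd hu (delVerts_not_mem G S (ht_spec _ ov oe h).1 (ht_spec _ ov oe h).2)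

end Del

/-! ### the index set Z -/

section Z

variable (ov : LinearOrder V) (S : Set V)

noncomputable def ovT : LinearOrder {u : V // u ∉ S} :=
  letI := ov; LinearOrder.lift' Subtype.val Subtype.val_injective

lemma ovT_lt {a b : {u : V // u ∉ S}} : (ovT ov S).lt a b ↔ ov.lt a.1 b.1 := by
  letI := ov
  letI := ovT ov S
  constructor
  · intro h
    rcases lt_trichotomy a.1 b.1 with h' | h' | h'
    · exact h'
    · exact absurd (Subtype.ext h') h.ne
    · exact absurd (show a.1 ≤ b.1 from h.le) (not_le.mpr h')
  · intro h
    rcases lt_trichotomy a b with h' | h' | h'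
    · exact h'
    · exact absurd h (h' ▸ lt_irrefl _)
    · exact absurd (show b.1 ≤ a.1 from h'.le) (not_le.mpr h)

noncomputable def rnk (u : {u : V // u ∉ S}) : ℕ :=
  letI := ovT ov S
  ((monoEquivOfFin {u : V // u ∉ S} rfl).symm u : Fin _).1

lemma rnk_lt (u : {u : V // u ∉ S}) :
    rnk ov S u < Fintype.card {u : V // u ∉ S} := by
  letI := ovT ov S
  exact ((monoEquivOfFin {u : V // u ∉ S} rfl).symm u).2

lemma rnk_lt_rnk {a b : {u : V // u ∉ S}} (h : ov.lt a.1 b.1) :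
    rnk ov S a < rnk ov S b := by
  letI := ovT ov S
  have : a < b := (ovT_lt ov S).mpr h
  have := (OrderIso.lt_iff_lt (monoEquivOfFin {u : V // u ∉ S} rfl).symm).mpr this
  exact this

noncomputable def zidx (β : ℕ × {u : V // u ∉ S}) : ℕ :=
  Fintype.card {u : V // u ∉ S} * β.1 + rnk ov S β.2

lemma zidx_lt_of {β γ : ℕ × {u : V // u ∉ S}} (h : zLT ov β γ) :
    zidx ov S β < zidx ov S γ := by
  have h1 := rnk_lt ov S β.2
  have h2 := rnk_lt ov S γ.2
  unfold zidx
  rcases h with h | ⟨he, h⟩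
  · have h3 : Fintype.card {u : V // u ∉ S} * (β.1 + 1) ≤
        Fintype.card {u : V // u ∉ S} * γ.1 :=
      Nat.mul_le_mul_left _ (by omega)
    have h4 : Fintype.card {u : V // u ∉ S} * (β.1 + 1) =
        Fintype.card {u : V // u ∉ S} * β.1 + Fintype.card {u : V // u ∉ S} := by ring
    omega
  · have := rnk_lt_rnk ov S h
    rw [he]
    omega

lemma zLT_trichot (β γ : ℕ × {u : V // u ∉ S}) : zLT ov β γ ∨ β = γ ∨ zLT ov γ β := by
  letI := ov
  rcases lt_trichotomy β.1 γ.1 with h | h | h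
  · exact Or.inl (Or.inl h)
  · rcases lt_trichotomy β.2.1 γ.2.1 with h' | h' | h'
    · exact Or.inl (Or.inr ⟨h, h'⟩)
    · exact Or.inr (Or.inl (Prod.ext h (Subtype.ext h')))
    · exact Or.inr (Or.inr (Or.inr ⟨h.symm, h'⟩))
  · exact Or.inr (Or.inr (Or.inl h))

lemma zidx_le_of {β γ : ℕ × {u : V // u ∉ S}} (h : zLE ov β γ) :
    zidx ov S β ≤ zidx ov S γ := by
  rcases h with h | rfl
  · exact (zidx_lt_of ov S h).le
  · exact le_rfl

lemma zLT_iff {β γ : ℕ × {u : V // u ∉ S}} : zLT ov β γ ↔ zidx ov S β < zidx ov S γ := by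
  constructor
  · exact zidx_lt_of ov S
  · intro h
    rcases zLT_trichot ov S β γ with h' | rfl | h'
    · exact h'
    · omega
    · exact absurd (zidx_lt_of ov S h') (by omega)

lemma zidx_inj {β γ : ℕ × {u : V // u ∉ S}} (h : zidx ov S β = zidx ov S γ) : β = γ := by
  rcases zLT_trichot ov S β γ with h' | h' | h'
  · exact absurd (zidx_lt_of ov S h') (by omega)
  · exact h'
  · exact absurd (zidx_lt_of ov S h') (by omega)

lemma zLE_iff {β γ : ℕ × {u : V // u ∉ S}} : zLE ov β γ ↔ zidx ov S β ≤ zidx ov S γ := by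
  constructor
  · exact zidx_le_of ov S
  · intro h
    rcases Nat.lt_or_ge (zidx ov S β) (zidx ov S γ) with h' | h'
    · exact Or.inl ((zLT_iff ov S).mpr h')
    · exact Or.inr (zidx_inj ov S (by omega))

noncomputable def ofIdx (hm : 0 < Fintype.card {u : V // u ∉ S}) (k : ℕ) :
    ℕ × {u : V // u ∉ S} :=
  letI := ovT ov S
  (k / Fintype.card {u : V // u ∉ S},
    (monoEquivOfFin {u : V // u ∉ S} rfl) ⟨k % Fintype.card {u : V // u ∉ S},
      Nat.mod_lt _ hm⟩)

lemma zidx_ofIdx (hm : 0 < Fintype.card {u : V // u ∉ S}) (k : ℕ) :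
    zidx ov S (ofIdx ov S hm k) = k := by
  letI := ovT ov S
  unfold zidx ofIdx rnk
  simp only [OrderIso.symm_apply_apply]
  exact Nat.div_add_mod k _

lemma ofIdx_zidx (hm : 0 < Fintype.card {u : V // u ∉ S}) (β : ℕ × {u : V // u ∉ S}) :
    ofIdx ov S hm (zidx ov S β) = β :=
  zidx_inj ov S (zidx_ofIdx ov S hm _)

lemma succ_zidx (hm : 0 < Fintype.card {u : V // u ∉ S}) {β γ : ℕ × {u : V // u ∉ S}}
    (h : IsSuccZ ov β γ) : zidx ov S γ = zidx ov S β + 1 := by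
  have h1 := zidx_lt_of ov S h.1
  have h2 := h.2 (ofIdx ov S hm (zidx ov S β + 1))
    ((zLT_iff ov S).mpr (by rw [zidx_ofIdx]; omega))
  have h3 := zidx_le_of ov S h2
  rw [zidx_ofIdx] at h3
  omega

lemma bot_zidx (hm : 0 < Fintype.card {u : V // u ∉ S}) {α : ℕ × {u : V // u ∉ S}}
    (h : ∀ δ, zLE ov α δ) : zidx ov S α = 0 := by
  have := zidx_le_of ov S (h (ofIdx ov S hm 0))
  rw [zidx_ofIdx] at this
  omega

end Z

/-! ### small helpers -/

section Helpers

variable (ov : LinearOrder V) (S : Set V)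

lemma ofOpt_ne_hole (o : Option (Sym2 V)) : ofOpt o ≠ Cell.hole := by
  cases o <;> simp [ofOpt]

lemma ofOpt_eq_edge {o : Option (Sym2 V)} {e : Sym2 V} :
    ofOpt o = Cell.edge e ↔ o = some e := by
  cases o <;> simp [ofOpt]

lemma zLE_refl (a : ℕ × {u : V // u ∉ S}) : zLE ov a a := Or.inr rfl

lemma zLT_irr (a : ℕ × {u : V // u ∉ S}) : ¬ zLT ov a a := by
  intro h
  have := zidx_lt_of ov S h
  omega

lemma zLT_tLT {a b : ℕ × {u : V // u ∉ S}} (h : zLT ov a b) :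
    tLT ov (a.1, a.2.1) (b.1, b.2.1) := by
  rcases h with h | ⟨h1, h2⟩
  · exact Or.inl h
  · exact Or.inr ⟨h1, h2⟩

lemma tLT_zLT {a b : ℕ × {u : V // u ∉ S}} (h : tLT ov (a.1, a.2.1) (b.1, b.2.1)) :
    zLT ov a b := by
  rcases h with h | ⟨h1, h2⟩
  · exact Or.inl h
  · exact Or.inr ⟨h1, h2⟩

lemma zLE_row {a b : ℕ × {u : V // u ∉ S}} (h : zLE ov a b) : a.1 ≤ b.1 := by
  rcases h with (h | ⟨h, -⟩) | rfl
  · exact h.le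
  · exact h.le
  · exact le_rfl

lemma zLE_mk_of_le {β : ℕ × {u : V // u ∉ S}} {j : ℕ} (h : β.1 ≤ j) :
    zLE ov β (j, β.2) := by
  rcases eq_or_lt_of_le h with h | h
  · right
    rw [← h]
  · exact Or.inl (Or.inl h)

lemma zcell_ne {a b : ℕ × {u : V // u ∉ S}} (h : zLT ov a b) :
    (a.1, a.2.1) ≠ ((b.1 : ℕ), b.2.1) := by
  intro hc
  rw [Prod.mk.injEq] at hc
  exact zLT_irr ov S a (by
    have : a = b := Prod.ext hc.1 (Subtype.ext hc.2)
    exact this ▸ h)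

end Helpers

/-! ### the construction -/

section Main

variable (G : SimpleGraph V) (ov : LinearOrder V) (oe : LinearOrder (Sym2 V)) (S : Set V)

/-- The initial array: the height table of `G` restricted to the columns outside `S`,
with the edges meeting `S` replaced by holes. -/
noncomputable def initArr : (ℕ × {u : V // u ∉ S}) → Cell V := fun δ =>
  match heightTable G ov oe (δ.1, δ.2.1) with
  | none => Cell.empty
  | some e => if e ∈ (delVerts G S).edgeSet then Cell.edge e else Cell.hole

/-- One step of the transition process at cell `β`. -/
noncomputable def stepArr (B : (ℕ × {u : V // u ∉ S}) → Cell V)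
    (β : ℕ × {u : V // u ∉ S}) : (ℕ × {u : V // u ∉ S}) → Cell V :=
  match heightTable (delVerts G S) ov oe (β.1, β.2.1) with
  | some e =>
    if h : ∃ δ, B δ = Cell.edge e then fun ε => B (Equiv.swap β h.choose ε) else B
  | none =>
    if B β = Cell.empty then B
    else if h : ∃ j, β.1 ≤ j ∧ B (j, β.2) ≠ Cell.hole then
      fun ε => B (Equiv.swap β (Nat.find h, β.2) ε)
    else B

/-- The invariants maintained by the process. -/
def Inv (B : (ℕ × {u : V // u ∉ S}) → Cell V) (k : ℕ) : Prop :=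
  (∀ δ e, B δ = Cell.edge e → e ∈ (delVerts G S).edgeSet) ∧
  (∀ e ∈ (delVerts G S).edgeSet, ∃! δ, B δ = Cell.edge e) ∧
  (∀ δ, zidx ov S δ < k → B δ = ofOpt (heightTable (delVerts G S) ov oe (δ.1, δ.2.1))) ∧
  (∀ δ, k ≤ zidx ov S δ → B δ ≠ Cell.hole →
    B δ = ofOpt (heightTable G ov oe (δ.1, δ.2.1))) ∧
  {δ | B δ = Cell.hole}.Finite ∧
  (∀ u, B (0, u) ≠ Cell.hole)

lemma inv_init : Inv G ov oe S (initArr G ov oe S) 0 := by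
  refine ⟨?_, ?_, ?_, ?_, ?_, ?_⟩
  · intro δ e h
    unfold initArr at h
    cases hA : heightTable G ov oe (δ.1, δ.2.1) with
    | none => rw [hA] at h; exact absurd h (by simp)
    | some f =>
      rw [hA] at h
      by_cases hf : f ∈ (delVerts G S).edgeSet
      · simp only [hf, if_true] at h
        obtain rfl : f = e := by injection h
        exact hf
      · simp [hf] at h
  · intro e he
    obtain ⟨β, hβ, hmem⟩ := ht_complete G ov oe (delVerts_subset G S he)
    have hβ2 : β.2 ∉ S := delVerts_not_mem G S he hmem
    refine ⟨(β.1, ⟨β.2, hβ2⟩), ?_, ?_⟩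
    · unfold initArr
      simp only
      rw [hβ]
      simp [he]
    · intro δ hδ
      unfold initArr at hδ
      cases hA : heightTable G ov oe (δ.1, δ.2.1) with
      | none => rw [hA] at hδ; exact absurd hδ (by simp)
      | some f =>
        rw [hA] at hδ
        by_cases hf : f ∈ (delVerts G S).edgeSet
        · simp only [hf, if_true] at hδ
          obtain rfl : f = e := by injection hδ
          have : (δ.1, δ.2.1) = β := by
            by_contra hne
            exact ht_inj G ov oe hne hA hβ
          have h1 : δ.1 = β.1 := congrArg Prod.fst this
          have h2 : (δ.2 : V) = β.2 := congrArg Prod.snd this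
          exact Prod.ext h1 (Subtype.ext h2)
        · simp [hf] at hδ
  · intro δ h; omega
  · intro δ h hh
    unfold initArr at hh ⊢
    cases hA : heightTable G ov oe (δ.1, δ.2.1) with
    | none => rfl
    | some f =>
      rw [hA] at hh
      by_cases hf : f ∈ (delVerts G S).edgeSet
      · show (if f ∈ (delVerts G S).edgeSet then Cell.edge f else Cell.hole) = ofOpt (some f)
        rw [if_pos hf]; rfl
      · exact absurd (show _ = Cell.hole from by
          show (if f ∈ (delVerts G S).edgeSet then Cell.edge f else Cell.hole) = Cell.hole
          rw [if_neg hf]) hh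
  · apply Set.Finite.subset ((Set.finite_Iic (Fintype.card (Sym2 V))).prod Set.finite_univ)
    intro δ hδ
    simp only [Set.mem_setOf_eq] at hδ
    unfold initArr at hδ
    cases hA : heightTable G ov oe (δ.1, δ.2.1) with
    | none => rw [hA] at hδ; exact absurd hδ (by simp)
    | some f =>
      refine Set.mem_prod.mpr ⟨Set.mem_Iic.mpr ?_, trivial⟩
      exact (ht_row G ov oe hA).2
  · intro u h
    unfold initArr at h
    cases hA : heightTable G ov oe ((0 : ℕ), u.1) with
    | none => rw [hA] at h; exact absurd h (by simp)
    | some f =>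
      have := (ht_row G ov oe hA).1
      simp at this


lemma stepArr_some {B : (ℕ × {u : V // u ∉ S}) → Cell V} {β : ℕ × {u : V // u ∉ S}}
    {e : Sym2 V} (hHB : heightTable (delVerts G S) ov oe (β.1, β.2.1) = some e)
    (h : ∃ δ, B δ = Cell.edge e) :
    stepArr G ov oe S B β = fun ε => B (Equiv.swap β h.choose ε) := by
  unfold stepArr
  rw [hHB]
  exact dif_pos h

lemma stepArr_none_empty {B : (ℕ × {u : V // u ∉ S}) → Cell V} {β : ℕ × {u : V // u ∉ S}}
    (hHB : heightTable (delVerts G S) ov oe (β.1, β.2.1) = none)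
    (hE : B β = Cell.empty) : stepArr G ov oe S B β = B := by
  unfold stepArr
  rw [hHB]
  exact if_pos hE

lemma stepArr_none_hole {B : (ℕ × {u : V // u ∉ S}) → Cell V} {β : ℕ × {u : V // u ∉ S}}
    (hHB : heightTable (delVerts G S) ov oe (β.1, β.2.1) = none)
    (hNE : B β ≠ Cell.empty) (h : ∃ j, β.1 ≤ j ∧ B (j, β.2) ≠ Cell.hole) :
    stepArr G ov oe S B β = fun ε => B (Equiv.swap β (Nat.find h, β.2) ε) := by
  unfold stepArr
  rw [hHB]
  show (if B β = Cell.empty then B else _) = _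
  rw [if_neg hNE]
  exact dif_pos h

lemma crit_exists {B : (ℕ × {u : V // u ∉ S}) → Cell V}
    (h5 : {δ : ℕ × {u : V // u ∉ S} | B δ = Cell.hole}.Finite)
    (β : ℕ × {u : V // u ∉ S}) : ∃ j, β.1 ≤ j ∧ B (j, β.2) ≠ Cell.hole := by
  have hcol : {i : ℕ | B (i, β.2) = Cell.hole}.Finite := by
    have : {i : ℕ | B (i, β.2) = Cell.hole} =
        (fun i => ((i, β.2) : ℕ × {u : V // u ∉ S})) ⁻¹'
          {δ : ℕ × {u : V // u ∉ S} | B δ = Cell.hole} := rfl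
    rw [this]
    apply Set.Finite.preimage _ h5
    intro a _ b _ hab
    exact congrArg Prod.fst hab
  obtain ⟨b, hb⟩ := hcol.bddAbove
  refine ⟨max β.1 (b + 1), le_max_left _ _, fun hc => ?_⟩
  have := hb hc
  have h2 := le_max_right β.1 (b + 1)
  omega

/-- The main step lemma: at cell `β` (with current index `k`), the step swaps the
content `A′(β)` into position `β` from within the critical interval. -/
lemma step_spec {B : (ℕ × {u : V // u ∉ S}) → Cell V} {k : ℕ} {β : ℕ × {u : V // u ∉ S}}
    (hI : Inv G ov oe S B k) (hkβ : zidx ov S β = k) :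
    ∃ δ, zLE ov β δ ∧
      stepArr G ov oe S B β = (fun ε => B (Equiv.swap β δ ε)) ∧
      B δ = ofOpt (heightTable (delVerts G S) ov oe (β.1, β.2.1)) ∧
      (δ ≠ β → B β = Cell.hole) ∧
      (∀ j, β.1 ≤ j → B (j, β.2) ≠ Cell.hole → zLE ov δ (j, β.2)) ∧
      (δ.2 ≠ β.2 → B δ = Cell.edge s(β.2.1, δ.2.1)) := by
  letI := oe
  obtain ⟨I1, I2, I3, I4, I5, I6⟩ := hI
  have hL1 : ∀ {δ e}, B δ = Cell.edge e → k ≤ zidx ov S δ →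
      heightTable G ov oe (δ.1, δ.2.1) = some e := by
    intro δ e h hk
    have h4 : B δ = ofOpt (heightTable G ov oe (δ.1, δ.2.1)) :=
      I4 δ hk (by rw [h]; simp)
    rw [h] at h4
    exact ofOpt_eq_edge.mp h4.symm
  have hL2 : ∀ {δ e}, B δ = Cell.edge e → k ≤ zidx ov S δ →
      ∀ δ', zLT ov δ' β → heightTable (delVerts G S) ov oe (δ'.1, δ'.2.1) ≠ some e := by
    intro δ e h hk δ' hlt hc
    have hzlt : zidx ov S δ' < k := by rw [← hkβ]; exact zidx_lt_of ov S hlt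
    have h3 : B δ' = ofOpt (heightTable (delVerts G S) ov oe (δ'.1, δ'.2.1)) := I3 δ' hzlt
    rw [hc] at h3
    have h3' : B δ' = Cell.edge e := h3
    obtain ⟨δ₁, -, hu⟩ := I2 e (I1 δ e h)
    have e1 := hu δ' h3'
    have e2 := hu δ h
    have e3 : δ' = δ := e1.trans e2.symm
    rw [e3] at hzlt
    omega
  have hmaxA' : ∀ {e f}, heightTable (delVerts G S) ov oe (β.1, β.2.1) = some e →
      f ∈ (delVerts G S).edgeSet → β.2.1 ∈ f →
      (∀ δ', zLT ov δ' β → heightTable (delVerts G S) ov oe (δ'.1, δ'.2.1) ≠ some f) →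
      oe.le f e := by
    intro e f hBe hf hmem hbef
    have hb : ∀ c, tLT ov c ((β.1 : ℕ), β.2.1) →
        heightTable (delVerts G S) ov oe c ≠ some f := by
      rintro ⟨c1, c2⟩ hc hcs
      by_cases hcS : c2 ∈ S
      · rw [ht_delVerts_none G S hcS ov oe] at hcs
        exact absurd hcs (by simp)
      · exact hbef (c1, ⟨c2, hcS⟩) (tLT_zLT ov S hc) hcs
    obtain ⟨g, hg, hle⟩ := ht_le (delVerts G S) ov oe (β := (β.1, β.2.1))
      (ht_mem_cellList _ ov oe hBe) hf hmem hb
    rw [hBe] at hg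
    exact ((Option.some.inj hg).symm : g = e) ▸ hle
  have hnorem : heightTable (delVerts G S) ov oe (β.1, β.2.1) = none → 1 ≤ β.1 →
      β.1 ≤ Fintype.card (Sym2 V) → ∀ f, f ∈ (delVerts G S).edgeSet → β.2.1 ∈ f →
      (∀ δ', zLT ov δ' β → heightTable (delVerts G S) ov oe (δ'.1, δ'.2.1) ≠ some f) →
      False := by
    intro hN h1 h2 f hf hmem hbef
    have hb : ∀ c, tLT ov c ((β.1 : ℕ), β.2.1) →
        heightTable (delVerts G S) ov oe c ≠ some f := by
      rintro ⟨c1, c2⟩ hc hcs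
      by_cases hcS : c2 ∈ S
      · rw [ht_delVerts_none G S hcS ov oe] at hcs
        exact absurd hcs (by simp)
      · exact hbef (c1, ⟨c2, hcS⟩) (tLT_zLT ov S hc) hcs
    obtain ⟨g, hg, -⟩ := ht_le (delVerts G S) ov oe (β := (β.1, β.2.1))
      ((mem_cellList ov).mpr ⟨h1, h2⟩) hf hmem hb
    rw [hN] at hg
    exact absurd hg (by simp)
  cases hHB : heightTable (delVerts G S) ov oe (β.1, β.2.1) with
  | some e =>
    have he' := ht_spec (delVerts G S) ov oe hHB
    have hrow := ht_row (delVerts G S) ov oe hHB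
    have hex : ∃ δ, B δ = Cell.edge e := (I2 e he'.1).exists
    have hδe : B hex.choose = Cell.edge e := hex.choose_spec
    set δ := hex.choose with hδdef
    have hstep := stepArr_some G ov oe S hHB hex
    have hkδ : k ≤ zidx ov S δ := by
      by_contra hlt
      push_neg at hlt
      have h3 : B δ = ofOpt (heightTable (delVerts G S) ov oe (δ.1, δ.2.1)) := I3 δ hlt
      rw [hδe] at h3
      have h3' : heightTable (delVerts G S) ov oe (δ.1, δ.2.1) = some e :=
        ofOpt_eq_edge.mp h3.symm
      have hzlt : zLT ov δ β := (zLT_iff ov S).mpr (by omega)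
      exact ht_inj (delVerts G S) ov oe (zcell_ne ov S hzlt) h3' hHB
    have hβδ : zLE ov β δ := (zLE_iff ov S).mpr (by omega)
    have hAδ : heightTable G ov oe (δ.1, δ.2.1) = some e := hL1 hδe hkδ
    have hδmem : δ.2.1 ∈ e := (ht_spec G ov oe hAδ).2
    have hmaxf : ∀ {δ₁ : ℕ × {u : V // u ∉ S}} {f}, B δ₁ = Cell.edge f →
        k ≤ zidx ov S δ₁ → β.2.1 ∈ f → oe.le f e := by
      intro δ₁ f h hk hmem
      exact hmaxA' hHB (I1 _ _ h) hmem (hL2 h hk)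
    have key : ∀ j, β.1 ≤ j → B (j, β.2) ≠ Cell.hole →
        ¬ tLT ov (j, β.2.1) (δ.1, δ.2.1) := by
      intro j hj hnh ht
      have h1j : 1 ≤ j := le_trans hrow.1 hj
      obtain ⟨f, hf, hlt⟩ := ht_lt G ov oe h1j ht hAδ he'.2
      have hz : zLE ov β ((j, β.2) : ℕ × {u : V // u ∉ S}) := zLE_mk_of_le ov S hj
      have hkj : k ≤ zidx ov S (j, β.2) := by rw [← hkβ]; exact zidx_le_of ov S hz
      have h4 : B (j, β.2) = ofOpt (heightTable G ov oe (j, β.2.1)) := I4 (j, β.2) hkj hnh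
      rw [hf] at h4
      have h4' : B (j, β.2) = Cell.edge f := h4
      have := hmaxf h4' hkj (ht_spec G ov oe hf).2
      exact absurd hlt (not_lt.mpr this)
    have hint : ∀ j, β.1 ≤ j → B (j, β.2) ≠ Cell.hole →
        zLE ov δ ((j, β.2) : ℕ × {u : V // u ∉ S}) := by
      intro j hj hnh
      rcases zLT_trichot ov S δ (j, β.2) with h | h | h
      · exact Or.inl h
      · exact Or.inr h
      · exact absurd (zLT_tLT ov S h) (key j hj hnh)
    have hole : δ ≠ β → B β = Cell.hole := by
      intro hne
      by_contra hnh
      have h4 : B β = ofOpt (heightTable G ov oe (β.1, β.2.1)) :=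
        I4 β (by omega) hnh
      have hzβδ : zLT ov β δ := by
        refine (zLT_iff ov S).mpr ?_
        have : zidx ov S δ ≠ k := fun hc => hne (zidx_inj ov S (by omega))
        omega
      obtain ⟨f, hf, hlt⟩ := ht_lt G ov oe hrow.1 (zLT_tLT ov S hzβδ) hAδ he'.2
      rw [hf] at h4
      have h4' : B β = Cell.edge f := h4
      have := hmaxf h4' (by omega) (ht_spec G ov oe hf).2
      exact absurd hlt (not_lt.mpr this)
    have hcross : δ.2 ≠ β.2 → B δ = Cell.edge s(β.2.1, δ.2.1) := by
      intro hne
      have hne' : β.2.1 ≠ δ.2.1 := fun hc => hne (Subtype.ext hc.symm)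
      have : e = s(β.2.1, δ.2.1) := (Sym2.mem_and_mem_iff hne').mp ⟨he'.2, hδmem⟩
      rw [hδe, this]
    refine ⟨δ, hβδ, hstep, ?_, hole, hint, hcross⟩
    exact hδe
  | none =>
    have hBβ : B β = Cell.empty ∨ B β = Cell.hole := by
      by_cases hh : B β = Cell.hole
      · exact Or.inr hh
      · left
        have h4 : B β = ofOpt (heightTable G ov oe (β.1, β.2.1)) := I4 β (by omega) hh
        cases hA : heightTable G ov oe (β.1, β.2.1) with
        | none => rw [hA] at h4; exact h4
        | some g =>
          exfalso
          rw [hA] at h4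
          have h4' : B β = Cell.edge g := h4
          have hrowA := ht_row G ov oe hA
          exact hnorem hHB hrowA.1 hrowA.2 g (I1 _ _ h4') (ht_spec G ov oe hA).2
            (hL2 h4' (by omega))
    rcases hBβ with hE | hH
    · have hstep : stepArr G ov oe S B β = fun ε => B (Equiv.swap β β ε) := by
        rw [stepArr_none_empty G ov oe S hHB hE]
        funext ε
        rw [Equiv.swap_self, Equiv.refl_apply]
      refine ⟨β, zLE_refl ov S β, hstep, ?_, fun h => absurd rfl h,
        fun j hj _ => zLE_mk_of_le ov S hj, fun h => absurd rfl h⟩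
      exact hE
    · have h1β : 1 ≤ β.1 := by
        rcases Nat.eq_zero_or_pos β.1 with h0 | h
        · exfalso
          apply I6 β.2
          rw [show ((0 : ℕ), β.2) = β from Prod.ext h0.symm rfl]
          exact hH
        · exact h
      have hcrit : ∃ j, β.1 ≤ j ∧ B (j, β.2) ≠ Cell.hole := crit_exists S I5 β
      have hj0 := Nat.find_spec hcrit
      have hNE : B β ≠ Cell.empty := by rw [hH]; simp
      have hstep := stepArr_none_hole G ov oe S hHB hNE hcrit
      have hz : zLE ov β ((Nat.find hcrit, β.2) : ℕ × {u : V // u ∉ S}) :=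
        zLE_mk_of_le ov S hj0.1
      have hempty : B (Nat.find hcrit, β.2) = Cell.empty := by
        have hkj : k ≤ zidx ov S (Nat.find hcrit, β.2) := by
          rw [← hkβ]; exact zidx_le_of ov S hz
        have h4 : B (Nat.find hcrit, β.2) =
            ofOpt (heightTable G ov oe (Nat.find hcrit, β.2.1)) :=
          I4 (Nat.find hcrit, β.2) hkj hj0.2
        cases hA : heightTable G ov oe (Nat.find hcrit, β.2.1) with
        | none => rw [hA] at h4; exact h4
        | some g =>
          exfalso
          rw [hA] at h4
          have h4' : B (Nat.find hcrit, β.2) = Cell.edge g := h4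
          have hrowA := ht_row G ov oe hA
          have hβN : β.1 ≤ Fintype.card (Sym2 V) := le_trans hj0.1 hrowA.2
          exact hnorem hHB h1β hβN g (I1 _ _ h4') (ht_spec G ov oe hA).2
            (hL2 h4' hkj)
      refine ⟨(Nat.find hcrit, β.2), hz, hstep, ?_, fun _ => hH, ?_, fun h => absurd rfl h⟩
      · exact hempty
      · intro j hj hnh
        have hle : Nat.find hcrit ≤ j := Nat.find_min' hcrit ⟨hj, hnh⟩
        rcases eq_or_lt_of_le hle with h | h
        · right
          rw [h]
        · exact Or.inl (Or.inl h)


/-- Swapping the content of `β` with the cell holding `A′(β)` preserves the invariants. -/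
lemma inv_swap {B : (ℕ × {u : V // u ∉ S}) → Cell V} {k : ℕ} {β δ : ℕ × {u : V // u ∉ S}}
    (hI : Inv G ov oe S B k) (hkβ : zidx ov S β = k) (hβδ : zLE ov β δ)
    (hδ : B δ = ofOpt (heightTable (delVerts G S) ov oe (β.1, β.2.1)))
    (hole : δ ≠ β → B β = Cell.hole) :
    Inv G ov oe S (fun ε => B (Equiv.swap β δ ε)) (k + 1) := by
  obtain ⟨I1, I2, I3, I4, I5, I6⟩ := hI
  have hkδ : k ≤ zidx ov S δ := hkβ ▸ zidx_le_of ov S hβδ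
  refine ⟨?_, ?_, ?_, ?_, ?_, ?_⟩
  · intro ε e h
    exact I1 _ e h
  · intro e he
    obtain ⟨δ₁, h₁, hu₁⟩ := I2 e he
    refine ⟨Equiv.swap β δ δ₁, ?_, ?_⟩
    · show B (Equiv.swap β δ (Equiv.swap β δ δ₁)) = _
      rw [Equiv.swap_apply_self]
      exact h₁
    · intro ε hε
      have h2 := hu₁ _ hε
      calc ε = Equiv.swap β δ (Equiv.swap β δ ε) := (Equiv.swap_apply_self _ _ _).symm
        _ = Equiv.swap β δ δ₁ := by rw [h2]
  · intro ε hε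
    rcases Nat.lt_or_ge (zidx ov S ε) k with h | h
    · have hεβ : ε ≠ β := fun hc => by rw [hc, hkβ] at h; omega
      have hεδ : ε ≠ δ := fun hc => by rw [hc] at h; omega
      show B (Equiv.swap β δ ε) = _
      rw [Equiv.swap_apply_of_ne_of_ne hεβ hεδ]
      exact I3 ε h
    · have hεk : zidx ov S ε = k := by omega
      have hεβ : ε = β := zidx_inj ov S (by rw [hεk, hkβ])
      rw [hεβ]
      show B (Equiv.swap β δ β) = _
      rw [Equiv.swap_apply_left]
      exact hδ
  · intro ε hε hh
    have hεβ : ε ≠ β := fun hc => by rw [hc, hkβ] at hε; omega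
    by_cases hεδ : ε = δ
    · exfalso
      apply hh
      rw [hεδ]
      show B (Equiv.swap β δ δ) = Cell.hole
      rw [Equiv.swap_apply_right]
      exact hole (by rw [← hεδ]; exact fun hc => hεβ hc)
    · have hh' : B (Equiv.swap β δ ε) ≠ Cell.hole := hh
      show B (Equiv.swap β δ ε) = _
      rw [Equiv.swap_apply_of_ne_of_ne hεβ hεδ] at hh' ⊢
      exact I4 ε (by omega) hh'
  · show {ε | B (Equiv.swap β δ ε) = Cell.hole}.Finite
    have heq : {ε | B (Equiv.swap β δ ε) = Cell.hole} =
        (Equiv.swap β δ) ⁻¹' {ε | B ε = Cell.hole} := rfl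
    rw [heq]
    exact Set.Finite.preimage (Equiv.injective _).injOn I5
  · intro u h
    have h' : B (Equiv.swap β δ ((0 : ℕ), u)) = Cell.hole := h
    by_cases h1 : ((0 : ℕ), u) = β
    · rw [h1, Equiv.swap_apply_left, hδ] at h'
      exact ofOpt_ne_hole _ h'
    · by_cases h2 : ((0 : ℕ), u) = δ
      · have hδ0 : δ.1 = 0 := by rw [← h2]
        have hβ0 : β.1 = 0 := by
          have hr := zLE_row ov S hβδ
          omega
        by_cases hδβ : δ = β
        · exact h1 (h2.trans hδβ)
        · apply I6 β.2
          rw [show ((0 : ℕ), β.2) = β from Prod.ext hβ0.symm rfl]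
          exact hole hδβ
      · rw [Equiv.swap_apply_of_ne_of_ne h1 h2] at h'
        exact I6 u h'

/-- The sequence of arrays, indexed by `ℕ ≃ Z`. -/
noncomputable def arrs (hm : 0 < Fintype.card {u : V // u ∉ S}) :
    ℕ → ((ℕ × {u : V // u ∉ S}) → Cell V)
  | 0 => initArr G ov oe S
  | k + 1 => stepArr G ov oe S (arrs hm k) (ofIdx ov S hm k)

lemma inv_arrs (hm : 0 < Fintype.card {u : V // u ∉ S}) (k : ℕ) :
    Inv G ov oe S (arrs G ov oe S hm k) k := by
  induction k with
  | zero => exact inv_init G ov oe S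
  | succ k ih =>
    obtain ⟨δ, hβδ, hstep, hδ, hole, -, -⟩ :=
      step_spec G ov oe S ih (zidx_ofIdx ov S hm k)
    show Inv G ov oe S (stepArr G ov oe S (arrs G ov oe S hm k) (ofIdx ov S hm k)) (k + 1)
    rw [hstep]
    exact inv_swap G ov oe S ih (zidx_ofIdx ov S hm k) hβδ hδ hole

end Main


/-- Lemma `stdtbl` of the paper.  Let `G` be an `n`-vertex totally
ordered graph, `S` a set of `s` vertices with `s ≤ n − 2`, `G′ = G − S` (inheriting
the orders), `A` the array obtained from the height table of `G` by deleting the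
columns indexed by `S`, and `A′` the height table of `G′`.  Then there is a family of
arrays `{A_β : β ∈ Z}`, `Z = {1,2,…} × V(G′)`, each cell being empty, an edge of
`G′`, or a hole, each edge of `G′` appearing in exactly one cell of each array, the
initial array having at most `s` holes in each column, and satisfying properties
(1)–(3). -/
theorem exists_transition_arrays {V : Type*} [Fintype V] (G : SimpleGraph V)
    (ov : LinearOrder V) (oe : LinearOrder (Sym2 V)) (n : ℕ)
    (hn : Fintype.card V = n) (S : Set V) (s : ℕ) (hS : S.ncard = s)
    (hsn : s + 2 ≤ n) :
    ∃ Af : (ℕ × {u : V // u ∉ S}) → (ℕ × {u : V // u ∉ S}) → Cell V,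
      -- every cell is empty, a hole, or contains an edge of G′
      (∀ β δ e, Af β δ = Cell.edge e → e ∈ (delVerts G S).edgeSet) ∧
      -- each edge of G′ appears in exactly one cell of each array
      (∀ β, ∀ e ∈ (delVerts G S).edgeSet, ∃! δ, Af β δ = Cell.edge e) ∧
      -- each column of the initial array contains at most s holes
      (∀ α, (∀ δ, zLE ov α δ) →
        ∀ u : {u : V // u ∉ S}, {i : ℕ | Af α (i, u) = Cell.hole}.ncard ≤ s) ∧
      ∀ β : ℕ × {u : V // u ∉ S},
        -- (1): below β, A_β agrees with the height table A′ of G′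
        (∀ δ, zLT ov δ β → Af β δ =
          ofOpt (heightTable (delVerts G S) ov oe (δ.1, δ.2.val))) ∧
        -- (2): at and above β, non-hole cells of A_β agree with A
        (∀ δ, zLE ov β δ → Af β δ ≠ Cell.hole →
          Af β δ = ofOpt (heightTable G ov oe (δ.1, δ.2.val))) ∧
        -- (3): the successor array is obtained by a swap inside the critical interval
        (∀ γ, IsSuccZ ov β γ → ∃ j, IsCritBound Af β j ∧
          ∃ δ, zLE ov β δ ∧ zLE ov δ (j, β.2) ∧
            (Af γ β = Af β δ ∧ Af γ δ = Af β β ∧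
              ∀ ε, ε ≠ β → ε ≠ δ → Af γ ε = Af β ε) ∧
            (δ.2 ≠ β.2 → Af β δ = Cell.edge s(β.2.val, δ.2.val))) := by
  have hcardS : Fintype.card {u : V // u ∈ S} = s := by
    rw [← hS, Set.ncard_eq_toFinset_card' S, Set.toFinset_card]
  have hm2 : Fintype.card {u : V // u ∉ S} = n - s := by
    rw [Fintype.card_subtype_compl, hcardS, hn]
  have hm : 0 < Fintype.card {u : V // u ∉ S} := by omega
  refine ⟨fun β => arrs G ov oe S hm (zidx ov S β), ?_, ?_, ?_, ?_⟩
  · intro β δ e h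
    exact (inv_arrs G ov oe S hm (zidx ov S β)).1 δ e h
  · intro β e he
    exact (inv_arrs G ov oe S hm (zidx ov S β)).2.1 e he
  · intro α hα u
    have h0 : zidx ov S α = 0 := bot_zidx ov S hm hα
    show {i : ℕ | arrs G ov oe S hm (zidx ov S α) (i, u) = Cell.hole}.ncard ≤ s
    rw [h0]
    show {i : ℕ | initArr G ov oe S (i, u) = Cell.hole}.ncard ≤ s
    have key : ∀ i ∈ {i : ℕ | initArr G ov oe S (i, u) = Cell.hole},
        ∃ w, w ∈ S ∧ heightTable G ov oe (i, u.1) = some s(u.1, w) := by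
      intro i hi
      have hi' : (match heightTable G ov oe (i, u.1) with
          | none => Cell.empty
          | some e => if e ∈ (delVerts G S).edgeSet then Cell.edge e else Cell.hole) =
          Cell.hole := hi
      cases hA : heightTable G ov oe (i, u.1) with
      | none => rw [hA] at hi'; exact absurd hi' (by simp)
      | some e =>
        rw [hA] at hi'
        have hi'' : (if e ∈ (delVerts G S).edgeSet then Cell.edge e else Cell.hole) =
            Cell.hole := hi'
        by_cases hf : e ∈ (delVerts G S).edgeSet
        · rw [if_pos hf] at hi''; exact absurd hi'' (by simp)
        · have he : e ∈ G.edgeSet := (ht_spec G ov oe hA).1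
          have hue : u.1 ∈ e := (ht_spec G ov oe hA).2
          have hex : ∃ w ∈ e, w ∈ S := by
            by_contra hc
            push_neg at hc
            exact hf ((mem_delVerts G S).mpr ⟨he, hc⟩)
          obtain ⟨w, hw, hwS⟩ := hex
          have hwu : u.1 ≠ w := fun hc => u.2 (hc ▸ hwS)
          have hee : e = s(u.1, w) := (Sym2.mem_and_mem_iff hwu).mp ⟨hue, hw⟩
          exact ⟨w, hwS, congrArg some hee⟩
    set F : ℕ → V := fun i =>
      if h : ∃ w, w ∈ S ∧ heightTable G ov oe (i, u.1) = some s(u.1, w) then h.choose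
      else u.1 with hF
    have hmaps : ∀ i ∈ {i : ℕ | initArr G ov oe S (i, u) = Cell.hole}, F i ∈ S := by
      intro i hi
      have h := key i hi
      rw [hF]
      simp only [dif_pos h]
      exact h.choose_spec.1
    have hinj : Set.InjOn F {i : ℕ | initArr G ov oe S (i, u) = Cell.hole} := by
      intro i1 h1 i2 h2 heq
      have k1 := key i1 h1
      have k2 := key i2 h2
      have e1 : F i1 = k1.choose := by rw [hF]; simp only [dif_pos k1]
      have e2 : F i2 = k2.choose := by rw [hF]; simp only [dif_pos k2]
      rw [e1, e2] at heq
      by_contra hne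
      have hc1 := k1.choose_spec.2
      have hc2 := k2.choose_spec.2
      rw [heq] at hc1
      exact ht_inj G ov oe (show ((i1 : ℕ), u.1) ≠ (i2, u.1) from fun hc =>
        hne (congrArg Prod.fst hc)) hc1 hc2
    calc {i : ℕ | initArr G ov oe S (i, u) = Cell.hole}.ncard ≤ S.ncard :=
        Set.ncard_le_ncard_of_injOn F hmaps hinj (Set.toFinite S)
      _ = s := hS
  · intro β
    have hInv := inv_arrs G ov oe S hm (zidx ov S β)
    refine ⟨?_, ?_, ?_⟩
    · intro δ hlt
      exact hInv.2.2.1 δ ((zLT_iff ov S).mp hlt)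
    · intro δ hle h
      exact hInv.2.2.2.1 δ ((zLE_iff ov S).mp hle) h
    · intro γ hsucc
      have hkγ : zidx ov S γ = zidx ov S β + 1 := succ_zidx ov S hm hsucc
      have hofβ : ofIdx ov S hm (zidx ov S β) = β := ofIdx_zidx ov S hm β
      obtain ⟨δ, hβδ, hstep, hδ, hole, hint, hcross⟩ :=
        step_spec G ov oe S (B := arrs G ov oe S hm (zidx ov S β))
          (k := zidx ov S β) (β := β) hInv rfl
      have hAγ : arrs G ov oe S hm (zidx ov S γ) =
          fun ε => arrs G ov oe S hm (zidx ov S β) (Equiv.swap β δ ε) := by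
        rw [hkγ]
        show stepArr G ov oe S (arrs G ov oe S hm (zidx ov S β))
          (ofIdx ov S hm (zidx ov S β)) = _
        rw [hofβ]
        exact hstep
      have hcrit : ∃ j, β.1 ≤ j ∧ arrs G ov oe S hm (zidx ov S β) (j, β.2) ≠ Cell.hole :=
        crit_exists S hInv.2.2.2.2.1 β
      have hspec := Nat.find_spec hcrit
      refine ⟨Nat.find hcrit, ⟨hspec.1, hspec.2, ?_⟩, δ, hβδ,
        hint _ hspec.1 hspec.2, ⟨?_, ?_, ?_⟩, hcross⟩
      · intro j' hj1 hj2
        by_contra hne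
        exact Nat.find_min hcrit hj2 ⟨hj1, hne⟩
      · show arrs G ov oe S hm (zidx ov S γ) β = arrs G ov oe S hm (zidx ov S β) δ
        rw [hAγ]
        show arrs G ov oe S hm (zidx ov S β) (Equiv.swap β δ β) = _
        rw [Equiv.swap_apply_left]
      · show arrs G ov oe S hm (zidx ov S γ) δ = arrs G ov oe S hm (zidx ov S β) β
        rw [hAγ]
        show arrs G ov oe S hm (zidx ov S β) (Equiv.swap β δ δ) = _
        rw [Equiv.swap_apply_right]
      · intro ε h1 h2
        show arrs G ov oe S hm (zidx ov S γ) ε = arrs G ov oe S hm (zidx ov S β) ε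
        rw [hAγ]
        show arrs G ov oe S hm (zidx ov S β) (Equiv.swap β δ ε) = _
        rw [Equiv.swap_apply_of_ne_of_ne h1 h2]


end AltitudePaper
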